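/- Let T be a finite nonabelian simple group and let A be a finite group having a normal subgroup isomorphic to T whose centralizer in A is trivial and such that A/T is solvable (i.e., A is almost simple with socle T, where A/T is solvable by the Schreier conjecture). Let S be a primitive permutation group on a finite set Ω with |Ω| = |T|. Then S is not isomorphic to any subgroup of A. -/

import Mathlib

open Subgroup
open scoped commutatorElement

theorem Equiv.Perm.inv_apply_self {α : Type*} (f : Equiv.Perm α) (x : α) : f⁻¹ (f x) = x :=
  Equiv.Perm.inv_eq_iff_eq.mpr rfl

section Aux

variable {G : Type*} [Group G]

lemma aux_card_sup [Finite G] (A B : Subgroup G)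
    (hB : B ≤ (Subgroup.normalizer (A : Set G))) (hd : A ⊓ B = ⊥) :
    Nat.card ↥(A ⊔ B) = Nat.card A * Nat.card B := by
  have hmem : ∀ x : G, x ∈ A ⊔ B → ∃ a ∈ A, ∃ b ∈ B, a * b = x := by
    set K : Subgroup G :=
      { carrier := {x | ∃ a ∈ A, ∃ b ∈ B, a * b = x}
        one_mem' := ⟨1, one_mem _, 1, one_mem _, one_mul 1⟩
        mul_mem' := by
          rintro x y ⟨a1, ha1, b1, hb1, rfl⟩ ⟨a2, ha2, b2, hb2, rfl⟩
          refine ⟨a1 * (b1 * a2 * b1⁻¹), mul_mem ha1 ?_, b1 * b2, mul_mem hb1 hb2, by group⟩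
          exact (Subgroup.mem_normalizer_iff.mp (hB hb1) a2).mp ha2
        inv_mem' := by
          rintro x ⟨a, ha, b, hb, rfl⟩
          refine ⟨b⁻¹ * a⁻¹ * b, ?_, b⁻¹, inv_mem hb, by group⟩
          have := (Subgroup.mem_normalizer_iff.mp (hB (inv_mem hb)) a⁻¹).mp (inv_mem ha)
          simpa using this } with hK
    intro x hx
    have hAK : A ≤ K := fun a ha => ⟨a, ha, 1, one_mem _, mul_one a⟩
    have hBK : B ≤ K := fun b hb => ⟨1, one_mem _, b, hb, one_mul b⟩
    exact (sup_le hAK hBK) hx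
  have hbij : Function.Bijective (fun p : ↥A × ↥B => (⟨(p.1 : G) * p.2,
      mul_mem (le_sup_left (a := A) (b := B) p.1.2) (le_sup_right (a := A) (b := B) p.2.2)⟩ :
        ↥(A ⊔ B))) := by
    constructor
    · rintro ⟨a1, b1⟩ ⟨a2, b2⟩ h
      have h' : (a1 : G) * b1 = (a2 : G) * b2 := congrArg Subtype.val h
      have key : (a2 : G)⁻¹ * a1 = b2 * (b1 : G)⁻¹ := by
        have h2 : (a2 : G)⁻¹ * ((a1 : G) * b1) * (b1 : G)⁻¹ =
            (a2 : G)⁻¹ * ((a2 : G) * b2) * (b1 : G)⁻¹ := by rw [h']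
        simpa [mul_assoc] using h2
      have hmemA : (a2 : G)⁻¹ * a1 ∈ A := mul_mem (inv_mem a2.2) a1.2
      have hmemB : (a2 : G)⁻¹ * a1 ∈ B := key ▸ mul_mem b2.2 (inv_mem b1.2)
      have : (a2 : G)⁻¹ * a1 ∈ A ⊓ B := ⟨hmemA, hmemB⟩
      rw [hd, Subgroup.mem_bot] at this
      have ha : (a2 : G) = a1 := inv_mul_eq_one.mp this
      have hb : (b2 : G) = b1 := mul_inv_eq_one.mp (key ▸ this)
      exact Prod.ext (Subtype.ext ha.symm) (Subtype.ext hb.symm)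
    · rintro ⟨x, hx⟩
      obtain ⟨a, ha, b, hb, rfl⟩ := hmem x hx
      exact ⟨(⟨a, ha⟩, ⟨b, hb⟩), rfl⟩
  calc Nat.card ↥(A ⊔ B) = Nat.card (↥A × ↥B) := (Nat.card_congr (Equiv.ofBijective _ hbij)).symm
    _ = Nat.card A * Nat.card B := Nat.card_prod _ _

end Aux
section Aux2

variable {G : Type*} [Group G]

lemma aux_pgroup_center [Finite G] {p : ℕ} [Fact p.Prime]
    (hG : IsPGroup p G) (W : Subgroup G) [hWn : W.Normal] (hW : W ≠ ⊥) :
    ∃ w : G, w ∈ W ∧ w ≠ 1 ∧ ∀ g : G, g * w = w * g := by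
  letI : MulAction G ↥W :=
    { smul := fun g w => ⟨g * ↑w * g⁻¹, hWn.conj_mem _ w.2 g⟩
      one_smul := fun w => Subtype.ext (show (1 : G) * ↑w * (1 : G)⁻¹ = ↑w by simp)
      mul_smul := fun g h w => Subtype.ext
        (show (g * h) * ↑w * (g * h)⁻¹ = g * (h * ↑w * h⁻¹) * g⁻¹ by
          simp [mul_assoc]) }
  have hsmul : ∀ (g : G) (w : ↥W), ((g • w : ↥W) : G) = g * ↑w * g⁻¹ := fun _ _ => rfl
  have h1 : (⟨1, one_mem W⟩ : ↥W) ∈ MulAction.fixedPoints G ↥W := by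
    intro g
    apply Subtype.ext
    rw [hsmul]
    simp
  have hdvd : p ∣ Nat.card ↥W := by
    obtain ⟨n, hn⟩ := (hG.to_subgroup W).exists_card_eq
    haveI : Nontrivial ↥W := (Subgroup.nontrivial_iff_ne_bot W).mpr hW
    have h2 : 1 < Nat.card ↥W := Finite.one_lt_card
    rcases Nat.eq_zero_or_pos n with hn0 | hn0
    · rw [hn0, pow_zero] at hn; omega
    · rw [hn]
      exact dvd_pow_self p (Nat.pos_iff_ne_zero.mp hn0)
  obtain ⟨b, hbfix, hbne⟩ :=
    hG.exists_fixed_point_of_prime_dvd_card_of_fixed_point ↥W hdvd h1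
  refine ⟨↑b, b.2, ?_, ?_⟩
  · intro hb1
    exact hbne (Subtype.ext hb1.symm)
  · intro g
    have := hbfix g
    have h3 : g * ↑b * g⁻¹ = (b : G) := by
      rw [← hsmul, this]
    calc g * ↑b = g * ↑b * g⁻¹ * g := by group
      _ = ↑b * g := by rw [h3]

lemma aux_solvable_pgroup [Finite G] (H : Subgroup G)
    (hs : IsSolvable ↥H) (hne : H ≠ ⊥) :
    ∃ (q : ℕ) (Q : Subgroup G), q.Prime ∧ Q ≠ ⊥ ∧ Q ≤ H ∧
      (∀ x ∈ Q, ∀ y ∈ Q, x * y = y * x) ∧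
      (∀ h ∈ H, ∀ u ∈ Q, h * u * h⁻¹ ∈ Q) ∧ IsPGroup q ↥Q := by
  classical
  haveI : Nontrivial ↥H := (Subgroup.nontrivial_iff_ne_bot H).mpr hne
  obtain ⟨n, hn⟩ := (isSolvable_def ↥H).mp hs
  have hex : ∃ n, derivedSeries ↥H n = ⊥ := ⟨n, hn⟩
  set n₀ := Nat.find hex with hn₀
  have hbot : derivedSeries ↥H n₀ = ⊥ := Nat.find_spec hex
  have hn₀pos : 0 < n₀ := by
    rcases Nat.eq_zero_or_pos n₀ with h0 | h0
    · exfalso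
      rw [h0] at hbot
      simp only [derivedSeries_zero] at hbot
      obtain ⟨a, ha⟩ := exists_ne (1 : ↥H)
      have : a ∈ (⊤ : Subgroup ↥H) := Subgroup.mem_top a
      rw [hbot, Subgroup.mem_bot] at this
      exact ha this
    · exact h0
  set M : Subgroup ↥H := derivedSeries ↥H (n₀ - 1) with hM
  have hMne : M ≠ ⊥ := Nat.find_min hex (by omega)
  have hMM : ⁅M, M⁆ = ⊥ := by
    have h1 : derivedSeries ↥H ((n₀ - 1) + 1) = ⁅M, M⁆ := derivedSeries_succ ↥H (n₀ - 1)
    rw [← h1]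
    have h2 : (n₀ - 1) + 1 = n₀ := by omega
    rw [h2, hbot]
  have hMcomm : ∀ a ∈ M, ∀ b ∈ M, Commute a b := by
    intro a ha b hb
    have : ⁅a, b⁆ ∈ (⊥ : Subgroup ↥H) := hMM ▸ commutator_mem_commutator ha hb
    rw [Subgroup.mem_bot] at this
    exact commutatorElement_eq_one_iff_commute.mp this
  haveI : Nontrivial ↥M := (Subgroup.nontrivial_iff_ne_bot M).mpr hMne
  have hcard : Nat.card ↥M ≠ 1 := Nat.ne_of_gt Finite.one_lt_card
  set q := (Nat.card ↥M).minFac with hq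
  have hqprime : q.Prime := Nat.minFac_prime hcard
  haveI : Fact q.Prime := ⟨hqprime⟩
  have hqdvd : q ∣ Nat.card ↥M := Nat.minFac_dvd _
  haveI : Fintype ↥M := Fintype.ofFinite ↥M
  obtain ⟨x, hx⟩ := exists_prime_orderOf_dvd_card (G := ↥M) q (by rwa [← Nat.card_eq_fintype_card])
  have hxq : x ^ q = 1 := by rw [← hx]; exact pow_orderOf_eq_one x
  have hxne : x ≠ 1 := by
    intro h1
    rw [h1, orderOf_one] at hx
    exact hqprime.one_lt.ne' hx.symm
  set Q' : Subgroup ↥H :=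
    { carrier := {y | y ∈ M ∧ y ^ q = 1}
      one_mem' := ⟨one_mem _, one_pow q⟩
      mul_mem' := by
        rintro a b ⟨haM, haq⟩ ⟨hbM, hbq⟩
        exact ⟨mul_mem haM hbM, by rw [(hMcomm a haM b hbM).mul_pow, haq, hbq, mul_one]⟩
      inv_mem' := by
        rintro a ⟨haM, haq⟩
        exact ⟨inv_mem haM, by rw [inv_pow, haq, inv_one]⟩ } with hQ'
  refine ⟨q, Q'.map H.subtype, hqprime, ?_, Subgroup.map_subtype_le Q', ?_, ?_, ?_⟩
  · -- nontrivial
    intro hbot'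
    have hxQ' : (↑x : ↥H) ∈ Q' := ⟨x.2, by
      have h5 : ((↑x : ↥H)) ^ q = ((x ^ q : ↥M) : ↥H) := (SubmonoidClass.coe_pow x q).symm
      rw [h5, hxq]
      rfl⟩
    have hmem2 : ((↑x : ↥H) : G) ∈ Q'.map H.subtype := ⟨↑x, hxQ', rfl⟩
    rw [hbot', Subgroup.mem_bot] at hmem2
    exact hxne (Subtype.ext (Subtype.ext hmem2))
  · -- commutative
    rintro x' ⟨a, ha, rfl⟩ y' ⟨b, hb, rfl⟩
    have := hMcomm a ha.1 b hb.1
    exact congrArg Subtype.val this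
  · -- normal in H
    rintro h hh u ⟨a, ha, rfl⟩
    refine ⟨⟨h, hh⟩ * a * ⟨h, hh⟩⁻¹, ⟨?_, ?_⟩, rfl⟩
    · exact (derivedSeries_normal ↥H (n₀ - 1)).conj_mem a ha.1 ⟨h, hh⟩
    · rw [conj_pow, ha.2, mul_one, mul_inv_cancel]
  · -- q-group
    intro u
    refine ⟨1, ?_⟩
    obtain ⟨a, ha, hau⟩ := u.2
    apply Subtype.ext
    rw [pow_one]
    have h7 : ((u ^ q : _) : G) = (u : G) ^ q := SubmonoidClass.coe_pow _ _
    rw [h7, ← hau, ← map_pow, ha.2, map_one]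
    rfl

end Aux2
section Aux3

open Pointwise

variable {G : Type*} [Group G]

lemma aux_invariant_sylow [Finite G] {q r : ℕ} (hq : q.Prime) (hr : r.Prime)
    (N Q : Subgroup G) (hQN : ∀ u ∈ Q, ∀ n : G, n ∈ N ↔ u * n * u⁻¹ ∈ N)
    (hQp : IsPGroup q ↥Q)
    (hcond : q = r ∨ ¬ q ∣ Nat.card N) :
    ∃ P : Subgroup G, P ≤ N ∧ Nat.card P = r ^ ((Nat.card N).factorization r) ∧
      ∀ u ∈ Q, ∀ x : G, x ∈ P ↔ u * x * u⁻¹ ∈ P := by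
  classical
  haveI : Fact r.Prime := ⟨hr⟩
  haveI : Fact q.Prime := ⟨hq⟩
  have mem_of : ∀ (u : ↥Q) (n : ↥N), (u : G) * ↑n * (u : G)⁻¹ ∈ N :=
    fun u n => (hQN u u.2 n).mp n.2
  set ψ : ↥Q →* MulAut ↥N :=
    { toFun := fun u =>
      { toFun := fun n => ⟨↑u * ↑n * (↑u)⁻¹, mem_of u n⟩
        invFun := fun n => ⟨(↑u)⁻¹ * ↑n * ↑u, by
          have h1 := (hQN _ (inv_mem u.2) n).mp n.2
          simpa using h1⟩
        left_inv := fun n => Subtype.ext (by simp [mul_assoc])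
        right_inv := fun n => Subtype.ext (by simp [mul_assoc])
        map_mul' := fun a b => Subtype.ext (by simp [mul_assoc]) }
      map_one' := by
        apply MulEquiv.ext
        intro n
        exact Subtype.ext (by simp)
      map_mul' := fun u v => by
        apply MulEquiv.ext
        intro n
        exact Subtype.ext (by simp [mul_assoc]) } with hψ
  have hψval : ∀ (u : ↥Q) (n : ↥N), ((ψ u n : ↥N) : G) = ↑u * ↑n * (↑u)⁻¹ :=
    fun _ _ => rfl
  letI dma : MulDistribMulAction ↥Q ↥N := MulDistribMulAction.compHom ↥N ψ
  letI : MulAction ↥Q (Sylow r ↥N) := Sylow.pointwiseMulAction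
  have hsmul_eq : ∀ (u : ↥Q) (n : ↥N), u • n = ψ u n := fun _ _ => rfl
  have hdvd : Nat.card (Sylow r ↥N) ∣ Nat.card ↥N :=
    ((default : Sylow r ↥N).card_dvd_index).trans (Subgroup.index_dvd_card _)
  have hnd : ¬ q ∣ Nat.card (Sylow r ↥N) := by
    rcases hcond with rfl | hq2
    · exact not_dvd_card_sylow q ↥N
    · exact fun h => hq2 (h.trans hdvd)
  obtain ⟨P, hPfix⟩ := hQp.nonempty_fixed_point_of_prime_not_dvd_card (Sylow r ↥N) hnd
  have hPfix' : ∀ u : ↥Q, ((u • P : Sylow r ↥N) : Subgroup ↥N) = (P : Subgroup ↥N) :=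
    fun u => by rw [hPfix u]
  refine ⟨Subgroup.map N.subtype (P : Subgroup ↥N), Subgroup.map_subtype_le _, ?_, ?_⟩
  · have e := Subgroup.equivMapOfInjective (P : Subgroup ↥N) N.subtype N.subtype_injective
    rw [← Nat.card_congr e.toEquiv]
    exact P.card_eq_multiplicity
  · have hforward : ∀ u ∈ Q, ∀ x ∈ Subgroup.map N.subtype (P : Subgroup ↥N),
        u * x * u⁻¹ ∈ Subgroup.map N.subtype (P : Subgroup ↥N) := by
      rintro u hu x ⟨y, hy, rfl⟩
      refine ⟨ψ ⟨u, hu⟩ y, ?_, rfl⟩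
      have h2 := hPfix' ⟨u, hu⟩
      rw [← h2, Sylow.pointwise_smul_def]
      have h3 := Subgroup.smul_mem_pointwise_smul y (⟨u, hu⟩ : ↥Q) (P : Subgroup ↥N) hy
      rwa [hsmul_eq] at h3
    intro u hu x
    constructor
    · exact hforward u hu x
    · intro hx
      have h4 := hforward u⁻¹ (inv_mem hu) _ hx
      have h5 : u⁻¹ * (u * x * u⁻¹) * u⁻¹⁻¹ = x := by group
      rwa [h5] at h4

end Aux3
section Aux4

open Pointwise

variable {G : Type*} [Group G]

lemma aux_mem_conj_smul (g : G) (U : Subgroup G) (x : G) :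
    x ∈ MulAut.conj g • U ↔ g⁻¹ * x * g ∈ U := by
  rw [Subgroup.mem_pointwise_smul_iff_inv_smul_mem]
  have h : (MulAut.conj g)⁻¹ • x = g⁻¹ * x * g := by
    simp [MulAut.smul_def]
  rw [h]

lemma aux_sylow_unique [Finite G] {q r : ℕ} (hq : q.Prime) (hr : r.Prime)
    (N Q : Subgroup G)
    (hQN : ∀ u ∈ Q, ∀ n : G, n ∈ N ↔ u * n * u⁻¹ ∈ N)
    (hQp : IsPGroup q ↥Q)
    (hqN : ¬ q ∣ Nat.card N)
    (hNQ : N ⊓ Q = ⊥)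
    (hCN : ∀ x ∈ N, (∀ u ∈ Q, u * x = x * u) → x = 1)
    (P₁ P₂ : Subgroup G)
    (h₁N : P₁ ≤ N) (h₂N : P₂ ≤ N)
    (hc₁ : Nat.card P₁ = r ^ ((Nat.card N).factorization r))
    (hc₂ : Nat.card P₂ = r ^ ((Nat.card N).factorization r))
    (hi₁ : ∀ u ∈ Q, ∀ x : G, x ∈ P₁ ↔ u * x * u⁻¹ ∈ P₁)
    (hi₂ : ∀ u ∈ Q, ∀ x : G, x ∈ P₂ ↔ u * x * u⁻¹ ∈ P₂) :
    P₁ = P₂ := by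
  classical
  haveI : Fact r.Prime := ⟨hr⟩
  haveI : Fact q.Prime := ⟨hq⟩
  have cardOf : ∀ (X Y : Subgroup G), X ≤ Y → Nat.card (X.subgroupOf Y) = Nat.card X :=
    fun X Y h => Nat.card_congr (Subgroup.subgroupOfEquivOfLe h).toEquiv
  -- Step 1: conjugacy of the two Sylow subgroups inside N
  set S₁ : Sylow r ↥N := Sylow.ofCard (P₁.subgroupOf N) (by rw [cardOf _ _ h₁N, hc₁]) with hS₁def
  set S₂ : Sylow r ↥N := Sylow.ofCard (P₂.subgroupOf N) (by rw [cardOf _ _ h₂N, hc₂]) with hS₂def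
  have hS₁ : (S₁ : Subgroup ↥N) = P₁.subgroupOf N := Sylow.coe_ofCard _ _
  have hS₂ : (S₂ : Subgroup ↥N) = P₂.subgroupOf N := Sylow.coe_ofCard _ _
  obtain ⟨g, hg⟩ := MulAction.exists_smul_eq ↥N S₁ S₂
  have hgsub : (S₂ : Subgroup ↥N) = MulAut.conj g • (S₁ : Subgroup ↥N) := by
    rw [← hg, Sylow.smul_def, Sylow.pointwise_smul_def]
  have key1 : ∀ x : G, x ∈ P₂ ↔ (↑g)⁻¹ * x * ↑g ∈ P₁ := by
    intro x
    constructor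
    · intro hx
      have hxN : x ∈ N := h₂N hx
      have hx2 : (⟨x, hxN⟩ : ↥N) ∈ (S₂ : Subgroup ↥N) := by
        rw [hS₂]
        exact Subgroup.mem_subgroupOf.mpr hx
      rw [hgsub, aux_mem_conj_smul, hS₁, Subgroup.mem_subgroupOf] at hx2
      exact hx2
    · intro hx
      have hxN : x ∈ N := by
        have h2 : (↑g : G) * ((↑g)⁻¹ * x * ↑g) * (↑g)⁻¹ ∈ N :=
          mul_mem (mul_mem g.2 (h₁N hx)) (inv_mem g.2)
        have h3 : (↑g : G) * ((↑g)⁻¹ * x * ↑g) * (↑g)⁻¹ = x := by group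
        rwa [h3] at h2
      have hx2 : (⟨x, hxN⟩ : ↥N) ∈ (S₂ : Subgroup ↥N) := by
        rw [hgsub, aux_mem_conj_smul, hS₁, Subgroup.mem_subgroupOf]
        exact hx
      rw [hS₂, Subgroup.mem_subgroupOf] at hx2
      exact hx2
  -- Step 2: the subgroup K
  set K : Subgroup G := (Subgroup.normalizer (P₂ : Set G)) ⊓ (N ⊔ Q) with hKdef
  have hQnormalizer : Q ≤ (Subgroup.normalizer (N : Set G)) := by
    intro u hu
    rw [Subgroup.mem_normalizer_iff]
    exact hQN u hu
  have hQK : Q ≤ K := by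
    intro u hu
    rw [hKdef, Subgroup.mem_inf]
    refine ⟨?_, le_sup_right (α := Subgroup G) hu⟩
    rw [Subgroup.mem_normalizer_iff]
    exact hi₂ u hu
  have hgQK : ∀ u ∈ Q, (↑g : G) * u * (↑g)⁻¹ ∈ K := by
    intro u hu
    rw [hKdef, Subgroup.mem_inf]
    constructor
    · rw [Subgroup.mem_normalizer_iff]
      intro x
      have e1 : (↑g * u * (↑g)⁻¹) * x * (↑g * u * (↑g)⁻¹)⁻¹ =
          ↑g * (u * ((↑g)⁻¹ * x * ↑g) * u⁻¹) * (↑g)⁻¹ := by group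
      rw [key1 x, hi₁ u hu ((↑g)⁻¹ * x * ↑g), e1, key1]
      have e2 : (↑g)⁻¹ * (↑g * (u * ((↑g)⁻¹ * x * ↑g) * u⁻¹) * (↑g)⁻¹) * ↑g =
          u * ((↑g)⁻¹ * x * ↑g) * u⁻¹ := by group
      rw [e2]
    · have h4 : (↑g : G) ∈ N ⊔ Q := le_sup_left (α := Subgroup G) g.2
      have h5 : u ∈ N ⊔ Q := le_sup_right (α := Subgroup G) hu
      exact mul_mem (mul_mem h4 h5) (inv_mem h4)
  -- Step 3: Q is a Sylow q-subgroup of K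
  obtain ⟨a, ha⟩ := hQp.exists_card_eq
  have hRcard : Nat.card ↥(N ⊔ Q) = Nat.card N * Nat.card Q :=
    aux_card_sup N Q hQnormalizer hNQ
  have hKR : K ≤ N ⊔ Q := inf_le_right
  have hKdvd : Nat.card K ∣ Nat.card N * Nat.card Q := by
    rw [← hRcard]
    exact Subgroup.card_dvd_of_le hKR
  have hQdvdK : Nat.card Q ∣ Nat.card K := Subgroup.card_dvd_of_le hQK
  have hKpos : Nat.card K ≠ 0 := Nat.pos_iff_ne_zero.mp Nat.card_pos
  have hNpos : Nat.card N ≠ 0 := Nat.pos_iff_ne_zero.mp Nat.card_pos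
  have hba : (Nat.card K).factorization q = a := by
    have h1 : a ≤ (Nat.card K).factorization q :=
      (Nat.Prime.pow_dvd_iff_le_factorization hq hKpos).mp (ha ▸ hQdvdK)
    have h2 : (Nat.card K).factorization q ≤ a := by
      have h3 : (Nat.card N * Nat.card Q).factorization q = a := by
        rw [Nat.factorization_mul hNpos (by rw [ha]; exact pow_ne_zero a hq.pos.ne')]
        simp only [Finsupp.coe_add, Pi.add_apply]
        rw [Nat.factorization_eq_zero_of_not_dvd hqN, ha, Nat.Prime.factorization_pow hq]
        simp
      have h4 := (Nat.factorization_le_iff_dvd hKpos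
        (by rw [← hRcard]; exact Nat.pos_iff_ne_zero.mp Nat.card_pos)).mpr hKdvd
      have h5 := h4 q
      rwa [h3] at h5
    omega
  have hQcardK : Nat.card (Q.subgroupOf K) = q ^ (Nat.card ↥K).factorization q := by
    rw [cardOf _ _ hQK, ha, hba]
  set SQ : Sylow q ↥K := Sylow.ofCard (Q.subgroupOf K) hQcardK with hSQdef
  have hSQ : (SQ : Subgroup ↥K) = Q.subgroupOf K := Sylow.coe_ofCard _ _
  set Qg : Subgroup G := Subgroup.map (MulAut.conj (↑g : G)).toMonoidHom Q with hQgdef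
  have hQgmem : ∀ x : G, x ∈ Qg ↔ ∃ u ∈ Q, ↑g * u * (↑g)⁻¹ = x := by
    intro x
    constructor
    · rintro ⟨u, hu, rfl⟩
      exact ⟨u, hu, rfl⟩
    · rintro ⟨u, hu, rfl⟩
      exact ⟨u, hu, rfl⟩
  have hQgK : Qg ≤ K := by
    intro x hx
    obtain ⟨u, hu, rfl⟩ := (hQgmem x).mp hx
    exact hgQK u hu
  have hQgcard : Nat.card Qg = Nat.card Q :=
    (Nat.card_congr (Subgroup.equivMapOfInjective Q _
      (MulAut.conj (↑g : G)).injective).toEquiv).symm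
  have hQgcardK : Nat.card (Qg.subgroupOf K) = q ^ (Nat.card ↥K).factorization q := by
    rw [cardOf _ _ hQgK, hQgcard, ha, hba]
  set SQg : Sylow q ↥K := Sylow.ofCard (Qg.subgroupOf K) hQgcardK with hSQgdef
  have hSQg : (SQg : Subgroup ↥K) = Qg.subgroupOf K := Sylow.coe_ofCard _ _
  obtain ⟨k, hk⟩ := MulAction.exists_smul_eq ↥K SQg SQ
  have hksub : (SQ : Subgroup ↥K) = MulAut.conj k • (SQg : Subgroup ↥K) := by
    rw [← hk, Sylow.smul_def, Sylow.pointwise_smul_def]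
  have key2 : ∀ x : G, x ∈ Q → (↑k)⁻¹ * x * ↑k ∈ Qg := by
    intro x hx
    have hxK : x ∈ K := hQK hx
    have h1 : (⟨x, hxK⟩ : ↥K) ∈ (SQ : Subgroup ↥K) := by
      rw [hSQ]
      exact Subgroup.mem_subgroupOf.mpr hx
    rw [hksub, aux_mem_conj_smul, hSQg, Subgroup.mem_subgroupOf] at h1
    exact h1
  have key3 : ∀ x : G, x ∈ Qg → ↑k * x * (↑k)⁻¹ ∈ Q := by
    intro x hx
    have hxK : x ∈ K := hQgK hx
    have hyK : (↑k : G) * x * (↑k)⁻¹ ∈ K := mul_mem (mul_mem k.2 hxK) (inv_mem k.2)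
    have h1 : (⟨↑k * x * (↑k)⁻¹, hyK⟩ : ↥K) ∈ (SQ : Subgroup ↥K) := by
      rw [hksub, aux_mem_conj_smul, hSQg, Subgroup.mem_subgroupOf]
      show ((↑k : G))⁻¹ * (↑k * x * (↑k)⁻¹) * ↑k ∈ Qg
      have e1 : ((↑k : G))⁻¹ * (↑k * x * (↑k)⁻¹) * ↑k = x := by group
      rw [e1]
      exact hx
    rw [hSQ, Subgroup.mem_subgroupOf] at h1
    exact h1
  -- Step 4: h₀ = k * g normalizes Q, and decomposes as n * u
  set h₀ : G := ↑k * ↑g with hh₀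
  have hQconj : ∀ w : G, w ∈ Q ↔ h₀⁻¹ * w * h₀ ∈ Q := by
    intro w
    constructor
    · intro hw
      have h1 := key2 w hw
      obtain ⟨u, hu, he⟩ := (hQgmem _).mp h1
      have h6 : h₀⁻¹ * w * h₀ = u := by
        have h7 : (↑g : G)⁻¹ * ((↑k : G)⁻¹ * w * ↑k) * ↑g = u := by
          rw [← he]; group
        rw [hh₀]
        calc (↑k * ↑g : G)⁻¹ * w * (↑k * ↑g) =
            (↑g : G)⁻¹ * ((↑k : G)⁻¹ * w * ↑k) * ↑g := by group
          _ = u := h7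
      rw [h6]; exact hu
    · intro hw
      have h2 : ∀ v ∈ Q, h₀ * v * h₀⁻¹ ∈ Q := by
        intro v hv
        have h3 : (↑g : G) * v * (↑g)⁻¹ ∈ Qg := (hQgmem _).mpr ⟨v, hv, rfl⟩
        have h4 := key3 _ h3
        have e : (↑k : G) * (↑g * v * (↑g)⁻¹) * (↑k)⁻¹ = h₀ * v * h₀⁻¹ := by
          rw [hh₀]; group
        rwa [e] at h4
      have h5 := h2 _ hw
      have e : h₀ * (h₀⁻¹ * w * h₀) * h₀⁻¹ = w := by group
      rwa [e] at h5
  have hh₀R : h₀ ∈ N ⊔ Q := by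
    have h1 : (↑k : G) ∈ N ⊔ Q := hKR k.2
    exact mul_mem h1 (le_sup_left (α := Subgroup G) g.2)
  obtain ⟨n, hnN, u, huQ, hnu⟩ : ∃ n ∈ N, ∃ u ∈ Q, n * u = h₀ := by
    have hNV : N ≤ (Subgroup.normalizer (N : Set G)) := Subgroup.le_normalizer
    have hQV : Q ≤ (Subgroup.normalizer (N : Set G)) := hQnormalizer
    have hRV : N ⊔ Q ≤ (Subgroup.normalizer (N : Set G)) := sup_le hNV hQV
    haveI : (N.subgroupOf (Subgroup.normalizer (N : Set G))).Normal := Subgroup.normal_in_normalizer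
    have hsup : (N ⊔ Q).subgroupOf (Subgroup.normalizer (N : Set G)) =
        N.subgroupOf (Subgroup.normalizer (N : Set G)) ⊔ Q.subgroupOf (Subgroup.normalizer (N : Set G)) := by
      apply Subgroup.map_injective (Subgroup.normalizer (N : Set G)).subtype_injective
      rw [Subgroup.map_sup, Subgroup.subgroupOf_map_subtype, Subgroup.subgroupOf_map_subtype,
        Subgroup.subgroupOf_map_subtype, inf_of_le_left hRV, inf_of_le_left hNV,
        inf_of_le_left hQV]
    have hmem : (⟨h₀, hRV hh₀R⟩ : ↥(Subgroup.normalizer (N : Set G))) ∈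
        N.subgroupOf (Subgroup.normalizer (N : Set G)) ⊔ Q.subgroupOf (Subgroup.normalizer (N : Set G)) := by
      rw [← hsup]
      exact Subgroup.mem_subgroupOf.mpr hh₀R
    have hset := Subgroup.normal_mul (N.subgroupOf (Subgroup.normalizer (N : Set G))) (Q.subgroupOf (Subgroup.normalizer (N : Set G)))
    have hmem2 : (⟨h₀, hRV hh₀R⟩ : ↥(Subgroup.normalizer (N : Set G))) ∈
        (↑(N.subgroupOf (Subgroup.normalizer (N : Set G))) * ↑(Q.subgroupOf (Subgroup.normalizer (N : Set G))) : Set ↥(Subgroup.normalizer (N : Set G))) := by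
      rw [← hset]
      exact hmem
    obtain ⟨n', hn', u', hu', he⟩ := hmem2
    refine ⟨↑n', Subgroup.mem_subgroupOf.mp hn', ↑u', Subgroup.mem_subgroupOf.mp hu', ?_⟩
    exact congrArg (fun z : ↥(Subgroup.normalizer (N : Set G)) => (z : G)) he
  have hn_eq : n = h₀ * u⁻¹ := by rw [← hnu]; group
  have hnQ : ∀ v ∈ Q, n * v * n⁻¹ ∈ Q := by
    intro v hv
    have h2 : u⁻¹ * v * u ∈ Q := mul_mem (mul_mem (inv_mem huQ) hv) huQ
    have h1 : h₀ * (u⁻¹ * v * u) * h₀⁻¹ ∈ Q := by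
      refine (hQconj (h₀ * (u⁻¹ * v * u) * h₀⁻¹)).mpr ?_
      have e : h₀⁻¹ * (h₀ * (u⁻¹ * v * u) * h₀⁻¹) * h₀ = u⁻¹ * v * u := by group
      rw [e]; exact h2
    have e : h₀ * (u⁻¹ * v * u) * h₀⁻¹ = n * v * n⁻¹ := by rw [hn_eq]; group
    rwa [e] at h1
  have hncomm : ∀ v ∈ Q, v * n = n * v := by
    intro v hv
    have h1 : n * v * n⁻¹ * v⁻¹ ∈ Q := mul_mem (hnQ v hv) (inv_mem hv)
    have h2 : n * v * n⁻¹ * v⁻¹ ∈ N := by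
      have h3 : v * n⁻¹ * v⁻¹ ∈ N := (hQN v hv n⁻¹).mp (inv_mem hnN)
      have e : n * v * n⁻¹ * v⁻¹ = n * (v * n⁻¹ * v⁻¹) := by group
      rw [e]; exact mul_mem hnN h3
    have h4 : n * v * n⁻¹ * v⁻¹ ∈ N ⊓ Q := ⟨h2, h1⟩
    rw [hNQ, Subgroup.mem_bot] at h4
    have h5 : n * v * n⁻¹ = v := mul_inv_eq_one.mp h4
    have h6 : n * v * n⁻¹ * n = v * n := by rw [h5]
    have e : n * v * n⁻¹ * n = n * v := by group
    rw [e] at h6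
    exact h6.symm
  have hn1 : n = 1 := hCN n hnN hncomm
  have hh₀Q : h₀ ∈ Q := by rw [← hnu, hn1, one_mul]; exact huQ
  -- Step 5: conclude
  have hkclose : ∀ x : G, x ∈ P₂ ↔ (↑k)⁻¹ * x * ↑k ∈ P₂ := by
    intro x
    have hk2 := Subgroup.mem_inf.mp (show (↑k : G) ∈ (Subgroup.normalizer (P₂ : Set G)) ⊓ (N ⊔ Q) from k.2)
    have h1 : (↑k : G)⁻¹ ∈ (Subgroup.normalizer (P₂ : Set G)) := inv_mem hk2.1
    have h2 := Subgroup.mem_normalizer_iff.mp h1 x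
    simpa using h2
  have hfin : ∀ x : G, x ∈ P₂ ↔ x ∈ P₁ := by
    intro x
    rw [hkclose x, key1]
    have e : (↑g : G)⁻¹ * ((↑k : G)⁻¹ * x * ↑k) * ↑g = h₀⁻¹ * x * h₀ := by
      rw [hh₀]; group
    rw [e]
    constructor
    · intro h1
      have h3 := (hi₁ h₀ hh₀Q _).mp h1
      have e2 : h₀ * (h₀⁻¹ * x * h₀) * h₀⁻¹ = x := by group
      rwa [e2] at h3
    · intro h1
      have h3 := (hi₁ h₀⁻¹ (inv_mem hh₀Q) x).mp h1
      rwa [inv_inv] at h3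
  ext x
  exact (hfin x).symm

end Aux4
section Aux5

variable {G : Type*} [Group G]

lemma aux_core [Finite G] (N H : Subgroup G)
    (hnorm : ∀ h ∈ H, ∀ n ∈ N, h * n * h⁻¹ ∈ N)
    (hdisj : N ⊓ H = ⊥)
    (hcomm : ∀ h ∈ H, (∀ n ∈ N, h * n = n * h) → h = 1)
    (hsolv : IsSolvable ↥H)
    (hnonab : ∃ a ∈ N, ∃ b ∈ N, a * b ≠ b * a)
    (hinv : ∀ P : Subgroup G, P ≤ N → (∀ h ∈ H, ∀ x ∈ P, h * x * h⁻¹ ∈ P) → P = ⊥ ∨ P = N) :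
    False := by
  classical
  have hnormIff : ∀ h ∈ H, ∀ n : G, n ∈ N ↔ h * n * h⁻¹ ∈ N := by
    intro h hh n
    constructor
    · exact fun hn => hnorm h hh n hn
    · intro hn
      have h2 := hnorm h⁻¹ (inv_mem hh) _ hn
      have e : h⁻¹ * (h * n * h⁻¹) * h⁻¹⁻¹ = n := by group
      rwa [e] at h2
  obtain ⟨a, haN, b, hbN, hab⟩ := hnonab
  have haneg : a ≠ 1 := fun h => hab (by rw [h, one_mul, mul_one])
  have hNne : N ≠ ⊥ := by
    intro h
    rw [h, Subgroup.mem_bot] at haN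
    exact haneg haN
  -- key: N is not an r-group
  have keyZ : ∀ r : ℕ, r.Prime → IsPGroup r ↥N → False := by
    intro r hrp hNP
    haveI : Fact r.Prime := ⟨hrp⟩
    set Z : Subgroup G := N ⊓ Subgroup.centralizer (N : Set G) with hZ
    have hZle : Z ≤ N := inf_le_left
    have hZinv : ∀ h ∈ H, ∀ x ∈ Z, h * x * h⁻¹ ∈ Z := by
      intro h hh x hx
      rw [hZ, Subgroup.mem_inf] at hx ⊢
      obtain ⟨hxN, hxc⟩ := hx
      refine ⟨(hnormIff h hh x).mp hxN, Subgroup.mem_centralizer_iff.mpr ?_⟩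
      intro n hn
      have hm : h⁻¹ * n * h ∈ N := by
        have h2 := hnorm h⁻¹ (inv_mem hh) n hn
        rwa [inv_inv] at h2
      have hmx := Subgroup.mem_centralizer_iff.mp hxc _ hm
      have e1 : n * (h * x * h⁻¹) = h * ((h⁻¹ * n * h) * x) * h⁻¹ := by group
      have e2 : (h * x * h⁻¹) * n = h * (x * (h⁻¹ * n * h)) * h⁻¹ := by group
      rw [e1, hmx, ← e2]
    haveI : Nontrivial ↥N := (Subgroup.nontrivial_iff_ne_bot N).mpr hNne
    haveI hcenter : Nontrivial (Subgroup.center ↥N) := hNP.center_nontrivial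
    obtain ⟨z, hz⟩ := exists_ne (1 : Subgroup.center ↥N)
    have hzZ : ((z : ↥N) : G) ∈ Z := by
      rw [hZ, Subgroup.mem_inf]
      refine ⟨(z : ↥N).2, Subgroup.mem_centralizer_iff.mpr ?_⟩
      intro n hn
      have hcz := Subgroup.mem_center_iff.mp z.2 ⟨n, hn⟩
      exact congrArg Subtype.val hcz
    have hzne : ((z : ↥N) : G) ≠ 1 := by
      intro h1
      exact hz (Subtype.ext (Subtype.ext h1))
    rcases hinv Z hZle hZinv with hbot | htop
    · rw [hbot, Subgroup.mem_bot] at hzZ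
      exact hzne hzZ
    · apply hab
      have hAZ : a ∈ Z := htop ▸ haN
      have h2 := Subgroup.mem_centralizer_iff.mp (Subgroup.mem_inf.mp (hZ ▸ hAZ)).2 b hbN
      exact h2.symm
  by_cases hHbot : H = ⊥
  · -- degenerate case: every subgroup of N is invariant
    have hinv' := hinv (Subgroup.closure {a})
      (by rw [Subgroup.closure_le]; simpa using haN)
      (by
        intro h hh x hx
        rw [hHbot, Subgroup.mem_bot] at hh
        subst hh
        simpa using hx)
    rcases hinv' with h1 | h2
    · have hmem : a ∈ Subgroup.closure ({a} : Set G) :=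
        Subgroup.subset_closure (Set.mem_singleton a)
      rw [h1, Subgroup.mem_bot] at hmem
      exact haneg hmem
    · have hbmem : b ∈ Subgroup.closure ({a} : Set G) := h2 ▸ hbN
      obtain ⟨m, hm⟩ := Subgroup.mem_closure_singleton.mp hbmem
      apply hab
      rw [← hm]
      exact ((Commute.refl a).zpow_right m)
  · -- main case
    obtain ⟨q, Q, hqp, hQne, hQH, hQcomm, hQnormH, hQp⟩ := aux_solvable_pgroup H hsolv hHbot
    haveI : Fact q.Prime := ⟨hqp⟩
    have hQN : ∀ u ∈ Q, ∀ n : G, n ∈ N ↔ u * n * u⁻¹ ∈ N := fun u hu => hnormIff u (hQH hu)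
    set C : Subgroup G := N ⊓ Subgroup.centralizer (Q : Set G) with hC
    have hCle : C ≤ N := inf_le_left
    have hCinv : ∀ h ∈ H, ∀ x ∈ C, h * x * h⁻¹ ∈ C := by
      intro h hh x hx
      rw [hC, Subgroup.mem_inf] at hx ⊢
      obtain ⟨hxN, hxc⟩ := hx
      refine ⟨(hnormIff h hh x).mp hxN, Subgroup.mem_centralizer_iff.mpr ?_⟩
      intro u hu
      have hu' : h⁻¹ * u * h ∈ Q := by
        have h2 := hQnormH h⁻¹ (inv_mem hh) u hu
        rwa [inv_inv] at h2
      have hcx := Subgroup.mem_centralizer_iff.mp hxc _ hu'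
      have e1 : u * (h * x * h⁻¹) = h * ((h⁻¹ * u * h) * x) * h⁻¹ := by group
      have e2 : (h * x * h⁻¹) * u = h * (x * (h⁻¹ * u * h)) * h⁻¹ := by group
      rw [e1, hcx, ← e2]
    have hCbot : C = ⊥ := by
      rcases hinv C hCle hCinv with h1 | h2
      · exact h1
      · exfalso
        apply hQne
        rw [Subgroup.eq_bot_iff_forall]
        intro u hu
        apply hcomm u (hQH hu)
        intro n hn
        have hnC : n ∈ C := h2 ▸ hn
        exact Subgroup.mem_centralizer_iff.mp (Subgroup.mem_inf.mp (hC ▸ hnC)).2 u hu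
    have hCN : ∀ x ∈ N, (∀ u ∈ Q, u * x = x * u) → x = 1 := by
      intro x hxN hcommx
      have hmem : x ∈ C := by
        rw [hC, Subgroup.mem_inf]
        exact ⟨hxN, Subgroup.mem_centralizer_iff.mpr hcommx⟩
      rw [hCbot, Subgroup.mem_bot] at hmem
      exact hmem
    have hNQdisj : N ⊓ Q = ⊥ := by
      rw [eq_bot_iff]
      intro x hx
      have h2 : x ∈ N ⊓ H :=
        Subgroup.mem_inf.mpr ⟨(Subgroup.mem_inf.mp hx).1, hQH (Subgroup.mem_inf.mp hx).2⟩
      rw [hdisj] at h2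
      exact h2
    haveI : Nontrivial ↥N := (Subgroup.nontrivial_iff_ne_bot N).mpr hNne
    have hNcard1 : Nat.card N ≠ 1 := Nat.ne_of_gt Finite.one_lt_card
    have hNpos : Nat.card N ≠ 0 := Nat.pos_iff_ne_zero.mp Nat.card_pos
    by_cases hqdvd : q ∣ Nat.card N
    · -- branch (i): r = q
      obtain ⟨P, hPN, hPcard, hPinv⟩ := aux_invariant_sylow hqp hqp N Q hQN hQp (Or.inl rfl)
      have hfq : 0 < (Nat.card N).factorization q :=
        Nat.Prime.factorization_pos_of_dvd hqp hNpos hqdvd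
      have hPne : P ≠ ⊥ := by
        intro h1
        rw [h1, Subgroup.card_bot] at hPcard
        have h2 : 1 < q ^ (Nat.card N).factorization q :=
          Nat.one_lt_pow (by omega) hqp.one_lt
        omega
      have hPnormalizerQ : Q ≤ (Subgroup.normalizer (P : Set G)) := by
        intro u hu
        rw [Subgroup.mem_normalizer_iff]
        exact hPinv u hu
      have hPQdisj : P ⊓ Q = ⊥ := by
        rw [eq_bot_iff]
        intro x hx
        have h2 : x ∈ N ⊓ Q :=
          Subgroup.mem_inf.mpr ⟨hPN (Subgroup.mem_inf.mp hx).1, (Subgroup.mem_inf.mp hx).2⟩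
        rw [hNQdisj] at h2
        exact h2
      have hJcard : Nat.card ↥(P ⊔ Q) = Nat.card P * Nat.card Q :=
        aux_card_sup P Q hPnormalizerQ hPQdisj
      obtain ⟨c, hc⟩ := hQp.exists_card_eq
      have hJp : IsPGroup q ↥(P ⊔ Q) :=
        IsPGroup.of_card (by rw [hJcard, hPcard, hc, ← pow_add])
      have hJnorm : P ⊔ Q ≤ (Subgroup.normalizer (P : Set G)) := sup_le Subgroup.le_normalizer hPnormalizerQ
      haveI hWnormal : (P.subgroupOf (P ⊔ Q)).Normal := by
        constructor
        intro n hn g'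
        rw [Subgroup.mem_subgroupOf] at hn ⊢
        exact (Subgroup.mem_normalizer_iff.mp (hJnorm g'.2) ↑n).mp hn
      have hWne : P.subgroupOf (P ⊔ Q) ≠ ⊥ := by
        obtain ⟨x, hx⟩ := Subgroup.ne_bot_iff_exists_ne_one.mp hPne
        rw [Subgroup.ne_bot_iff_exists_ne_one]
        refine ⟨⟨⟨↑x, le_sup_left (α := Subgroup G) x.2⟩,
          Subgroup.mem_subgroupOf.mpr x.2⟩, ?_⟩
        intro h1
        apply hx
        have h2 : ((x : G)) = 1 :=
          congrArg (fun z : ↥(P.subgroupOf (P ⊔ Q)) => ((z : ↥(P ⊔ Q)) : G)) h1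
        exact Subtype.ext h2
      obtain ⟨w, hwW, hwne, hwcen⟩ := aux_pgroup_center hJp (P.subgroupOf (P ⊔ Q)) hWne
      have hwN : (↑w : G) ∈ N := hPN (Subgroup.mem_subgroupOf.mp hwW)
      have hw1 : (↑w : G) = 1 := by
        apply hCN ↑w hwN
        intro u hu
        have h3 := hwcen ⟨u, le_sup_right (α := Subgroup G) hu⟩
        exact congrArg Subtype.val h3
      exact hwne (Subtype.ext hw1)
    · -- branch (ii): r = minimal prime factor of |N|
      set r := (Nat.card N).minFac with hrdef
      have hrp : r.Prime := Nat.minFac_prime hNcard1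
      have hrdvd : r ∣ Nat.card N := Nat.minFac_dvd _
      obtain ⟨P, hPN, hPcard, hPinv⟩ := aux_invariant_sylow hqp hrp N Q hQN hQp (Or.inr hqdvd)
      have hfr : 0 < (Nat.card N).factorization r :=
        Nat.Prime.factorization_pos_of_dvd hrp hNpos hrdvd
      have hPne : P ≠ ⊥ := by
        intro h1
        rw [h1, Subgroup.card_bot] at hPcard
        have h2 : 1 < r ^ (Nat.card N).factorization r :=
          Nat.one_lt_pow (by omega) hrp.one_lt
        omega
      have hPinvH : ∀ h ∈ H, ∀ x ∈ P, h * x * h⁻¹ ∈ P := by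
        intro h hh x hx
        set P' : Subgroup G := Subgroup.map (MulAut.conj h).toMonoidHom P with hP'
        have hP'mem : ∀ y : G, y ∈ P' ↔ ∃ x' ∈ P, h * x' * h⁻¹ = y := by
          intro y
          constructor
          · rintro ⟨x', hx', rfl⟩
            exact ⟨x', hx', rfl⟩
          · rintro ⟨x', hx', rfl⟩
            exact ⟨x', hx', rfl⟩
        have hP'N : P' ≤ N := by
          intro y hy
          obtain ⟨x', hx', rfl⟩ := (hP'mem y).mp hy
          exact (hnormIff h hh x').mp (hPN hx')
        have hP'card : Nat.card P' = r ^ ((Nat.card N).factorization r) := by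
          rw [← hPcard]
          exact (Nat.card_congr (Subgroup.equivMapOfInjective P _
            (MulAut.conj h).injective).toEquiv).symm
        have hfwd : ∀ u ∈ Q, ∀ y ∈ P', u * y * u⁻¹ ∈ P' := by
          intro u hu y hy
          obtain ⟨x', hx', rfl⟩ := (hP'mem y).mp hy
          have hu' : h⁻¹ * u * h ∈ Q := by
            have h2 := hQnormH h⁻¹ (inv_mem hh) u hu
            rwa [inv_inv] at h2
          refine (hP'mem _).mpr ⟨(h⁻¹ * u * h) * x' * (h⁻¹ * u * h)⁻¹,
            (hPinv _ hu' x').mp hx', ?_⟩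
          group
        have hP'inv : ∀ u ∈ Q, ∀ y : G, y ∈ P' ↔ u * y * u⁻¹ ∈ P' := by
          intro u hu y
          constructor
          · exact fun hy => hfwd u hu y hy
          · intro hy
            have h2 := hfwd u⁻¹ (inv_mem hu) _ hy
            have e : u⁻¹ * (u * y * u⁻¹) * u⁻¹⁻¹ = y := by group
            rwa [e] at h2
        have hPP' := aux_sylow_unique hqp hrp N Q hQN hQp hqdvd hNQdisj hCN P P'
          hPN hP'N hPcard hP'card hPinv hP'inv
        rw [hPP']
        exact (hP'mem _).mpr ⟨x, hx, rfl⟩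
      rcases hinv P hPN hPinvH with h1 | h2
      · exact hPne h1
      · apply keyZ r hrp
        apply IsPGroup.of_card (n := (Nat.card N).factorization r)
        rw [h2] at hPcard
        exact hPcard

end Aux5
section Perm

variable {Ω : Type*}

lemma aux_perm_transitive (S : Subgroup (Equiv.Perm Ω))
    (hSprim : ∀ B : Set Ω,
      (∀ σ ∈ S, (fun x => σ x) '' B = B ∨ Disjoint ((fun x => σ x) '' B) B) →
      B.Subsingleton ∨ B = Set.univ)
    (K : Subgroup (Equiv.Perm Ω)) (hKS : K ≤ S)
    (hKnorm : ∀ s ∈ S, ∀ k ∈ K, s * k * s⁻¹ ∈ K) (hK : K ≠ ⊥) :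
    ∀ a b : Ω, ∃ k ∈ K, k a = b := by
  obtain ⟨k₀, hk₀⟩ := Subgroup.ne_bot_iff_exists_ne_one.mp hK
  have hmove : ∃ γ : Ω, (↑k₀ : Equiv.Perm Ω) γ ≠ γ := by
    by_contra hc
    push_neg at hc
    exact hk₀ (Subtype.ext (Equiv.ext hc))
  obtain ⟨γ, hγ⟩ := hmove
  set B : Set Ω := {x | ∃ k ∈ K, (k : Equiv.Perm Ω) γ = x} with hB
  have horbit : ∀ σ ∈ S,
      ((fun x => σ x) '' B) = {x | ∃ k ∈ K, (k : Equiv.Perm Ω) (σ γ) = x} := by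
    intro σ hσ
    ext x
    constructor
    · rintro ⟨y, ⟨k, hk, rfl⟩, rfl⟩
      refine ⟨σ * k * σ⁻¹, hKnorm σ hσ k hk, ?_⟩
      simp [Equiv.Perm.mul_apply]
    · rintro ⟨k, hk, rfl⟩
      refine ⟨(σ⁻¹ * k * σ) γ, ⟨σ⁻¹ * k * σ, ?_, rfl⟩, ?_⟩
      · have h2 := hKnorm σ⁻¹ (inv_mem hσ) k hk
        rwa [inv_inv] at h2
      · simp [Equiv.Perm.mul_apply]
  have hprem : ∀ σ ∈ S, (fun x => σ x) '' B = B ∨ Disjoint ((fun x => σ x) '' B) B := by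
    intro σ hσ
    by_cases hcase : ∃ k₁ ∈ K, (k₁ : Equiv.Perm Ω) γ = σ γ
    · left
      obtain ⟨k₁, hk₁, hk₁γ⟩ := hcase
      rw [horbit σ hσ]
      ext x
      constructor
      · rintro ⟨k, hk, rfl⟩
        exact ⟨k * k₁, mul_mem hk hk₁, by simp [Equiv.Perm.mul_apply, hk₁γ]⟩
      · rintro ⟨k, hk, rfl⟩
        refine ⟨k * k₁⁻¹, mul_mem hk (inv_mem hk₁), ?_⟩
        rw [← hk₁γ]
        simp [Equiv.Perm.mul_apply]
    · right
      rw [Set.disjoint_left]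
      rintro x hx1 hx2
      rw [horbit σ hσ] at hx1
      obtain ⟨k, hk, rfl⟩ := hx1
      obtain ⟨k', hk', he⟩ := hx2
      apply hcase
      refine ⟨k⁻¹ * k', mul_mem (inv_mem hk) hk', ?_⟩
      rw [Equiv.Perm.mul_apply, he, Equiv.Perm.inv_apply_self]
  rcases hSprim B hprem with hsing | huniv
  · exfalso
    have h1 : γ ∈ B := ⟨1, one_mem K, rfl⟩
    have h2 : (↑k₀ : Equiv.Perm Ω) γ ∈ B := ⟨↑k₀, k₀.2, rfl⟩
    exact hγ (hsing h2 h1)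
  · intro a b'
    have ha : a ∈ B := by rw [huniv]; trivial
    have hb : b' ∈ B := by rw [huniv]; trivial
    obtain ⟨ka, hka, hkaγ⟩ := ha
    obtain ⟨kb, hkb, hkbγ⟩ := hb
    refine ⟨kb * ka⁻¹, mul_mem hkb (inv_mem hka), ?_⟩
    rw [← hkaγ, ← hkbγ]
    rw [Equiv.Perm.mul_apply, Equiv.Perm.inv_apply_self]

lemma aux_perm_blocks [Finite Ω] (S : Subgroup (Equiv.Perm Ω))
    (hSprim : ∀ B : Set Ω,
      (∀ σ ∈ S, (fun x => σ x) '' B = B ∨ Disjoint ((fun x => σ x) '' B) B) →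
      B.Subsingleton ∨ B = Set.univ)
    (N : Subgroup (Equiv.Perm Ω)) (hNS : N ≤ S) (α : Ω)
    (hfree : ∀ n ∈ N, (n : Equiv.Perm Ω) α = α → n = 1)
    (htrans : ∀ b : Ω, ∃ n ∈ N, (n : Equiv.Perm Ω) α = b) :
    ∀ P : Subgroup (Equiv.Perm Ω), P ≤ N →
      (∀ s ∈ S, (s : Equiv.Perm Ω) α = α → ∀ x ∈ P, s * x * s⁻¹ ∈ P) → P = ⊥ ∨ P = N := by
  intro P hPN hPinv
  set B : Set Ω := {x | ∃ p ∈ P, (p : Equiv.Perm Ω) α = x} with hB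
  have hprem : ∀ σ ∈ S, (fun x => σ x) '' B = B ∨ Disjoint ((fun x => σ x) '' B) B := by
    intro σ hσ
    obtain ⟨n, hnN, hnα⟩ := htrans (σ α)
    have hsS : n⁻¹ * σ ∈ S := mul_mem (inv_mem (hNS hnN)) hσ
    have hsα : ((n⁻¹ * σ : Equiv.Perm Ω)) α = α := by
      rw [Equiv.Perm.mul_apply, ← hnα, Equiv.Perm.inv_apply_self]
    have hs'S : (n⁻¹ * σ)⁻¹ ∈ S := inv_mem hsS
    have hs'α : (((n⁻¹ * σ)⁻¹ : Equiv.Perm Ω)) α = α := by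
      calc ((n⁻¹ * σ)⁻¹ : Equiv.Perm Ω) α
          = ((n⁻¹ * σ)⁻¹ : Equiv.Perm Ω) ((n⁻¹ * σ) α) := by rw [hsα]
        _ = α := Equiv.Perm.inv_apply_self _ _
    have himg : (fun x => σ x) '' B = {x | ∃ p ∈ P, ((n * p : Equiv.Perm Ω)) α = x} := by
      ext x
      constructor
      · rintro ⟨y, ⟨p, hp, rfl⟩, rfl⟩
        refine ⟨(n⁻¹ * σ) * p * (n⁻¹ * σ)⁻¹, hPinv _ hsS hsα p hp, ?_⟩
        have e1 : n * ((n⁻¹ * σ) * p * (n⁻¹ * σ)⁻¹) = σ * p * (n⁻¹ * σ)⁻¹ := by group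
        rw [e1]
        show (σ * p * (n⁻¹ * σ)⁻¹) α = σ (p α)
        rw [Equiv.Perm.mul_apply, Equiv.Perm.mul_apply, hs'α]
      · rintro ⟨p, hp, rfl⟩
        have hps : (n⁻¹ * σ)⁻¹ * p * (n⁻¹ * σ) ∈ P := by
          have h2 := hPinv _ hs'S hs'α p hp
          rwa [inv_inv] at h2
        refine ⟨((n⁻¹ * σ)⁻¹ * p * (n⁻¹ * σ)) α, ⟨_, hps, rfl⟩, ?_⟩
        have e1 : σ * ((n⁻¹ * σ)⁻¹ * p * (n⁻¹ * σ)) = (n * p) * (n⁻¹ * σ) := by group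
        show σ (((n⁻¹ * σ)⁻¹ * p * (n⁻¹ * σ)) α) = (n * p) α
        rw [← Equiv.Perm.mul_apply, e1, Equiv.Perm.mul_apply, hsα]
    rw [himg]
    by_cases hnP : n ∈ P
    · left
      ext x
      constructor
      · rintro ⟨p, hp, rfl⟩
        exact ⟨n * p, mul_mem hnP hp, rfl⟩
      · rintro ⟨p, hp, rfl⟩
        refine ⟨n⁻¹ * p, mul_mem (inv_mem hnP) hp, ?_⟩
        have e : n * (n⁻¹ * p) = p := by group
        rw [e]
    · right
      rw [Set.disjoint_left]
      rintro x ⟨p, hp, rfl⟩ ⟨p', hp', he⟩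
      apply hnP
      have hmemN : p'⁻¹ * (n * p) ∈ N := mul_mem (inv_mem (hPN hp')) (mul_mem hnN (hPN hp))
      have hfix : ((p'⁻¹ * (n * p) : Equiv.Perm Ω)) α = α := by
        rw [Equiv.Perm.mul_apply, ← he, Equiv.Perm.inv_apply_self]
      have h1 := hfree _ hmemN hfix
      have h2 : n = p' * p⁻¹ := by
        have h3 := congrArg (fun z => p' * z * p⁻¹) h1
        simp only [mul_one] at h3
        rw [← h3]
        group
      rw [h2]
      exact mul_mem hp' (inv_mem hp)
  rcases hSprim B hprem with hsing | huniv
  · left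
    rw [Subgroup.eq_bot_iff_forall]
    intro p hp
    have h1 : (p : Equiv.Perm Ω) α ∈ B := ⟨p, hp, rfl⟩
    have h2 : α ∈ B := ⟨1, one_mem P, rfl⟩
    exact hfree p (hPN hp) (hsing h1 h2)
  · right
    have hinj : Function.Injective (fun n : ↥N => (n : Equiv.Perm Ω) α) := by
      intro n m hnm
      have hmemN : (↑m : Equiv.Perm Ω)⁻¹ * ↑n ∈ N := mul_mem (inv_mem m.2) n.2
      have hfix : (((↑m : Equiv.Perm Ω)⁻¹ * ↑n : Equiv.Perm Ω)) α = α := by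
        rw [Equiv.Perm.mul_apply]
        simp only at hnm
        rw [hnm, Equiv.Perm.inv_apply_self]
      have h1 := hfree _ hmemN hfix
      apply Subtype.ext
      have h2 := congrArg (fun z => (↑m : Equiv.Perm Ω) * z) h1
      simpa using h2
    have hsurjP : Function.Surjective (fun p : ↥P => (p : Equiv.Perm Ω) α) := by
      intro x
      have hx : x ∈ B := by rw [huniv]; trivial
      obtain ⟨p, hp, he⟩ := hx
      exact ⟨⟨p, hp⟩, he⟩
    have hcard1 : Nat.card N ≤ Nat.card Ω := Nat.card_le_card_of_injective _ hinj
    have hcard2 : Nat.card Ω ≤ Nat.card P := Nat.card_le_card_of_surjective _ hsurjP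
    exact Subgroup.eq_of_le_of_card_ge hPN (hcard1.trans hcard2)

end Perm
/-- Let `A` be a finite almost simple group with socle `T` (so `T` is a
nonabelian simple normal subgroup of `A` with trivial centralizer, and `A/T` is solvable
by the Schreier conjecture).  Let `S` be a primitive permutation group on a finite set
`Ω` with `|Ω| = |T|` (transitive, with no nontrivial invariant partition, i.e. every
block is trivial).  Then `S` is not isomorphic to any subgroup of `A`. -/
theorem stmt12 {A : Type*} [Group A] [Finite A] (T : Subgroup A) [T.Normal]
    (hTsimple : IsSimpleGroup T) (hTnonab : ∃ a b : T, a * b ≠ b * a)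
    (hcent : Subgroup.centralizer (T : Set A) = ⊥)
    (hsolv : IsSolvable (A ⧸ T))
    {Ω : Type*} [Finite Ω] (hΩ : Nat.card Ω = Nat.card T)
    (S : Subgroup (Equiv.Perm Ω))
    (hStrans : ∀ a b : Ω, ∃ σ ∈ S, σ a = b)
    (hSprim : ∀ B : Set Ω,
      (∀ σ ∈ S, (fun x => σ x) '' B = B ∨ Disjoint ((fun x => σ x) '' B) B) →
      B.Subsingleton ∨ B = Set.univ) :
    ¬ ∃ f : S →* A, Function.Injective f := by
  rintro ⟨f, hf⟩
  classical
  haveI : Group.IsSolvable (A ⧸ T) := hsolv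
  haveI := hTsimple
  haveI : Nontrivial ↥T := hTsimple.toNontrivial
  have hcardT : 1 < Nat.card ↥T := Finite.one_lt_card
  have hΩpos : 1 < Nat.card Ω := by rw [hΩ]; exact hcardT
  haveI : Nontrivial Ω := Finite.one_lt_card_iff_nontrivial.mp hΩpos
  obtain ⟨α⟩ := (inferInstance : Nonempty Ω)
  set φ : ↥S →* A ⧸ T := (QuotientGroup.mk' T).comp f with hφ
  set N' : Subgroup ↥S := T.comap f with hN'
  have hkerφ : φ.ker = N' := by
    ext x
    rw [MonoidHom.mem_ker, hφ, MonoidHom.comp_apply, QuotientGroup.mk'_apply,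
      QuotientGroup.eq_one_iff]
    rfl
  set N : Subgroup (Equiv.Perm Ω) := N'.map S.subtype with hN
  have hNS : N ≤ S := Subgroup.map_subtype_le N'
  have hNmem : ∀ x : Equiv.Perm Ω, x ∈ N ↔ ∃ hx : x ∈ S, f ⟨x, hx⟩ ∈ T := by
    intro x
    constructor
    · rintro ⟨y, hy, rfl⟩
      exact ⟨y.2, hy⟩
    · rintro ⟨hx, hfx⟩
      exact ⟨⟨x, hx⟩, hfx, rfl⟩
  have hNnorm : ∀ s ∈ S, ∀ n ∈ N, s * n * s⁻¹ ∈ N := by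
    intro s hs n hn
    obtain ⟨hnS, hfn⟩ := (hNmem n).mp hn
    have hmem : s * n * s⁻¹ ∈ S := mul_mem (mul_mem hs hnS) (inv_mem hs)
    refine (hNmem _).mpr ⟨hmem, ?_⟩
    have he : (⟨s * n * s⁻¹, hmem⟩ : ↥S) = ⟨s, hs⟩ * ⟨n, hnS⟩ * ⟨s, hs⟩⁻¹ := rfl
    rw [he, map_mul, map_mul, map_inv]
    exact Subgroup.Normal.conj_mem ‹T.Normal› _ hfn _
  by_cases hN'bot : N' = ⊥
  · -- Case 1: S embeds in the solvable group A/T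
    have hφinj : Function.Injective φ := by
      have h1 : φ.ker = ⊥ := by rw [hkerφ]; exact hN'bot
      exact (MonoidHom.ker_eq_bot_iff φ).mp h1
    haveI hSsolv : IsSolvable ↥S := solvable_of_solvable_injective hφinj
    have hSne : S ≠ ⊥ := by
      obtain ⟨x, y, hxy⟩ := exists_pair_ne Ω
      obtain ⟨σ, hσS, hσ⟩ := hStrans x y
      intro hbot
      rw [hbot, Subgroup.mem_bot] at hσS
      rw [hσS] at hσ
      exact hxy hσ
    obtain ⟨q, Q, hqp, hQne, hQS, hQcomm, hQnorm, hQp⟩ := aux_solvable_pgroup S hSsolv hSne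
    haveI : Fact q.Prime := ⟨hqp⟩
    have hQtrans := aux_perm_transitive S hSprim Q hQS hQnorm hQne
    have hinj : Function.Injective (fun u : ↥Q => (u : Equiv.Perm Ω) α) := by
      intro u v huv
      simp only at huv
      have hdQ : (↑v : Equiv.Perm Ω)⁻¹ * ↑u ∈ Q := mul_mem (inv_mem v.2) u.2
      have hdα : ((↑v : Equiv.Perm Ω)⁻¹ * ↑u) α = α := by
        rw [Equiv.Perm.mul_apply, huv, Equiv.Perm.inv_apply_self]
      have hdid : ∀ β : Ω, ((↑v : Equiv.Perm Ω)⁻¹ * ↑u) β = β := by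
        intro β
        obtain ⟨e, heQ, heα⟩ := hQtrans α β
        have hcomm2 := hQcomm _ hdQ e heQ
        rw [← heα, ← Equiv.Perm.mul_apply, hcomm2, Equiv.Perm.mul_apply, hdα]
      have h1 : (↑v : Equiv.Perm Ω)⁻¹ * ↑u = 1 := Equiv.ext hdid
      apply Subtype.ext
      have h2 := congrArg (fun z => (↑v : Equiv.Perm Ω) * z) h1
      simpa using h2
    have hsurj : Function.Surjective (fun u : ↥Q => (u : Equiv.Perm Ω) α) := by
      intro b
      obtain ⟨u, hu, he⟩ := hQtrans α b
      exact ⟨⟨u, hu⟩, he⟩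
    have hcardQ : Nat.card ↥Q = Nat.card Ω := Nat.card_eq_of_bijective _ ⟨hinj, hsurj⟩
    obtain ⟨c, hc⟩ := hQp.exists_card_eq
    have hTq : IsPGroup q ↥T := IsPGroup.of_card (by rw [← hΩ, ← hcardQ, hc])
    haveI hTcn : Nontrivial (Subgroup.center ↥T) := hTq.center_nontrivial
    rcases hTsimple.eq_bot_or_eq_top_of_normal (Subgroup.center ↥T) inferInstance
      with hbot | htop
    · obtain ⟨z, hz⟩ := exists_ne (1 : Subgroup.center ↥T)
      apply hz
      apply Subtype.ext
      have h1 : (↑z : ↥T) ∈ (⊥ : Subgroup ↥T) := hbot ▸ z.2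
      exact Subgroup.mem_bot.mp h1
    · obtain ⟨a, b, hab⟩ := hTnonab
      apply hab
      have h1 : a ∈ Subgroup.center ↥T := htop ▸ Subgroup.mem_top a
      exact (Subgroup.mem_center_iff.mp h1 b).symm
  · -- Case 2: N is a regular normal subgroup isomorphic to T
    have hNbot : N ≠ ⊥ := by
      intro h
      apply hN'bot
      rw [Subgroup.eq_bot_iff_forall]
      intro x hx
      have h1 : (↑x : Equiv.Perm Ω) ∈ N := ⟨x, hx, rfl⟩
      rw [h, Subgroup.mem_bot] at h1
      exact Subtype.ext h1
    have hNtrans := aux_perm_transitive S hSprim N hNS hNnorm hNbot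
    have hcardN' : Nat.card N = Nat.card N' :=
      (Nat.card_congr (Subgroup.equivMapOfInjective N' S.subtype S.subtype_injective).toEquiv).symm
    have hNcard_le : Nat.card N ≤ Nat.card ↥T := by
      have hinj2 : Function.Injective (fun x : ↥N' => (⟨f ↑x, x.2⟩ : ↥T)) := by
        intro x y hxy
        have h1 : f ↑x = f ↑y := congrArg Subtype.val hxy
        exact Subtype.ext (hf h1)
      rw [hcardN']
      exact Nat.card_le_card_of_injective _ hinj2
    have hsurjN : Function.Surjective (fun x : ↥N => (x : Equiv.Perm Ω) α) := by
      intro b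
      obtain ⟨u, hu, he⟩ := hNtrans α b
      exact ⟨⟨u, hu⟩, he⟩
    have hΩ_le : Nat.card Ω ≤ Nat.card N := Nat.card_le_card_of_surjective _ hsurjN
    have hNcard : Nat.card N = Nat.card Ω := by
      have h1 : Nat.card N ≤ Nat.card Ω := by rw [hΩ]; exact hNcard_le
      exact le_antisymm h1 hΩ_le
    have hbij : Function.Bijective (fun x : ↥N => (x : Equiv.Perm Ω) α) :=
      (Nat.bijective_iff_surjective_and_card _).mpr ⟨hsurjN, hNcard⟩
    have hfree : ∀ n ∈ N, (n : Equiv.Perm Ω) α = α → n = 1 := by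
      intro n hn hnα
      have h1 : (⟨n, hn⟩ : ↥N) = ⟨1, one_mem N⟩ := by
        apply hbij.1
        simp only
        rw [hnα]
        rfl
      exact congrArg Subtype.val h1
    have hmapT : N'.map f = T := by
      apply Subgroup.eq_of_le_of_card_ge
      · rintro y ⟨x, hx, rfl⟩
        exact hx
      · have h1 : Nat.card (N'.map f) = Nat.card N' :=
          (Nat.card_congr (Subgroup.equivMapOfInjective N' f hf).toEquiv).symm
        rw [h1, ← hcardN', hNcard, hΩ]
    set Hst : Subgroup (Equiv.Perm Ω) :=
      { carrier := {σ | σ ∈ S ∧ σ α = α}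
        one_mem' := ⟨one_mem S, rfl⟩
        mul_mem' := by
          rintro σ τ ⟨hσ1, hσ2⟩ ⟨hτ1, hτ2⟩
          exact ⟨mul_mem hσ1 hτ1, by rw [Equiv.Perm.mul_apply, hτ2, hσ2]⟩
        inv_mem' := by
          rintro σ ⟨hσ1, hσ2⟩
          refine ⟨inv_mem hσ1, ?_⟩
          calc (σ⁻¹ : Equiv.Perm Ω) α = σ⁻¹ (σ α) := by rw [hσ2]
            _ = α := Equiv.Perm.inv_apply_self _ _ } with hHst
    have hHstS : Hst ≤ S := fun σ hσ => hσ.1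
    have hHmem : ∀ σ : Equiv.Perm Ω, σ ∈ Hst ↔ σ ∈ S ∧ σ α = α := fun σ => Iff.rfl
    apply aux_core N Hst
    · intro h hh n hn
      exact hNnorm h ((hHmem h).mp hh).1 n hn
    · rw [eq_bot_iff]
      intro x hx
      have h1 := Subgroup.mem_inf.mp hx
      rw [Subgroup.mem_bot]
      exact hfree x h1.1 ((hHmem x).mp h1.2).2
    · intro h hh hc
      have hhS : h ∈ S := ((hHmem h).mp hh).1
      have hfh : f ⟨h, hhS⟩ ∈ Subgroup.centralizer (T : Set A) := by
        rw [Subgroup.mem_centralizer_iff]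
        intro t ht
        have ht' : t ∈ N'.map f := hmapT ▸ ht
        obtain ⟨x, hx, rfl⟩ := ht'
        have hxN : (↑x : Equiv.Perm Ω) ∈ N := ⟨x, hx, rfl⟩
        have hcomm2 : h * ↑x = ↑x * h := hc ↑x hxN
        have h3 : (⟨h, hhS⟩ : ↥S) * x = x * ⟨h, hhS⟩ := Subtype.ext hcomm2
        calc f x * f ⟨h, hhS⟩ = f (x * ⟨h, hhS⟩) := (map_mul f _ _).symm
          _ = f (⟨h, hhS⟩ * x) := by rw [← h3]
          _ = f ⟨h, hhS⟩ * f x := map_mul f _ _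
      rw [hcent, Subgroup.mem_bot] at hfh
      have h4 : (⟨h, hhS⟩ : ↥S) = 1 := hf (by rw [hfh, map_one])
      exact congrArg Subtype.val h4
    · have hker : ((QuotientGroup.mk' T).comp (f.comp (Subgroup.inclusion hHstS))).ker = ⊥ := by
        rw [Subgroup.eq_bot_iff_forall]
        intro x hx
        rw [MonoidHom.mem_ker, MonoidHom.comp_apply, MonoidHom.comp_apply,
          QuotientGroup.mk'_apply, QuotientGroup.eq_one_iff] at hx
        have h1 : (Subgroup.inclusion hHstS x) ∈ N' := hx
        have h2 : (↑x : Equiv.Perm Ω) ∈ N := ⟨_, h1, rfl⟩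
        have h3 : (↑x : Equiv.Perm Ω) α = α := ((hHmem ↑x).mp x.2).2
        exact Subtype.ext (hfree _ h2 h3)
      exact solvable_of_solvable_injective ((MonoidHom.ker_eq_bot_iff _).mp hker)
    · obtain ⟨a, b, hab⟩ := hTnonab
      have haT : (↑a : A) ∈ N'.map f := by rw [hmapT]; exact a.2
      have hbT : (↑b : A) ∈ N'.map f := by rw [hmapT]; exact b.2
      obtain ⟨x, hx, hxa⟩ := haT
      obtain ⟨y, hy, hyb⟩ := hbT
      refine ⟨↑x, ⟨x, hx, rfl⟩, ↑y, ⟨y, hy, rfl⟩, ?_⟩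
      intro hcomm2
      apply hab
      have h1 : x * y = y * x := Subtype.ext hcomm2
      have h2 : f (x * y) = f (y * x) := by rw [h1]
      rw [map_mul, map_mul, hxa, hyb] at h2
      exact Subtype.ext h2
    · intro P hPle hPinv
      apply aux_perm_blocks S hSprim N hNS α hfree (fun b => hNtrans α b) P hPle
      intro s hs hsα x hx
      exact hPinv s ((hHmem s).mpr ⟨hs, hsα⟩) x hx
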